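/- For every ℓ ∈ ℕ^r, there exists an element f ∈ O with ord_i f = ℓ_i for every i (i.e., ℓ belongs to the semigroup of values of O) if and only if h(ℓ+E_i) > h(ℓ) for every index i. -/

import Mathlib

/-- `Gbar r ℓ` is the subspace of `r`-tuples of power series whose `i`-th component has
order at least `ℓ i`, for every `i`. -/
noncomputable def Gbar (r : ℕ) (ℓ : Fin r → ℕ) : Submodule ℂ (Fin r → PowerSeries ℂ) where
  carrier := {f | ∀ i : Fin r, (ℓ i : ℕ∞) ≤ (f i).order}
  zero_mem' := by
    intro i
    simp [PowerSeries.order_zero]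
  add_mem' := by
    intro a b ha hb i
    refine le_trans (le_min (ha i) (hb i)) ?_
    simpa using PowerSeries.min_order_le_order_add (a i) (b i)
  smul_mem' := by
    intro c f hf i
    refine PowerSeries.le_order _ _ ?_
    intro n hn
    have hlt : (n : ℕ∞) < ((f : Fin r → PowerSeries ℂ) i).order := lt_of_lt_of_le hn (hf i)
    have : (PowerSeries.coeff (R := ℂ) n) ((c • f) i) = c • (PowerSeries.coeff (R := ℂ) n) (f i) := by
      simp
    rw [this, PowerSeries.coeff_of_lt_order n hlt, smul_zero]

/-- `F O ℓ = O ∩ Ḡ(ℓ)`, the valuation filtration of the subspace `O`. -/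
noncomputable def Ffil (r : ℕ) (O : Submodule ℂ (Fin r → PowerSeries ℂ)) (ℓ : Fin r → ℕ) :
    Submodule ℂ (Fin r → PowerSeries ℂ) :=
  O ⊓ Gbar r ℓ

/-- `hfun O ℓ = dim_ℂ O / (O ∩ Ḡ(ℓ))`, the Hilbert function of the filtration. -/
noncomputable def hfun (r : ℕ) (O : Submodule ℂ (Fin r → PowerSeries ℂ)) (ℓ : Fin r → ℕ) : ℕ :=
  Module.finrank ℂ (O ⧸ (Gbar r ℓ).comap O.subtype)

/-- `hbarfun O ℓ = dim_ℂ V / (Ḡ(ℓ) + O)`. -/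
noncomputable def hbarfun (r : ℕ) (O : Submodule ℂ (Fin r → PowerSeries ℂ)) (ℓ : Fin r → ℕ) : ℕ :=
  Module.finrank ℂ ((Fin r → PowerSeries ℂ) ⧸ (Gbar r ℓ ⊔ O))

/-- `eN i` is the `i`-th standard basis vector of `ℕ^r`. -/
def eN {r : ℕ} (i : Fin r) : Fin r → ℕ := fun j => if j = i then 1 else 0


/-- Truncation map sending a tuple of power series to its coefficients below `m i`. -/
noncomputable def truncMap (r : ℕ) (m : Fin r → ℕ) :
    (Fin r → PowerSeries ℂ) →ₗ[ℂ] ((i : Fin r) → Fin (m i) → ℂ) where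
  toFun f := fun i k => PowerSeries.coeff (R := ℂ) k (f i)
  map_add' := by intro a b; funext i k; simp
  map_smul' := by intro c a; funext i k; simp

lemma ker_truncMap (r : ℕ) (m : Fin r → ℕ) :
    LinearMap.ker (truncMap r m) = Gbar r m := by
  ext f
  constructor
  · intro hf i
    refine PowerSeries.nat_le_order _ _ ?_
    intro k hk
    have := congrFun (congrFun hf i) ⟨k, hk⟩
    simpa [truncMap] using this
  · intro hf
    funext i k
    simp only [truncMap, LinearMap.coe_mk, AddHom.coe_mk]
    have : (k : ℕ∞) < (f i).order :=
      lt_of_lt_of_le (by exact_mod_cast k.2) (hf i)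
    simpa using PowerSeries.coeff_of_lt_order _ this

instance quotGbar_findim (r : ℕ) (O : Submodule ℂ (Fin r → PowerSeries ℂ)) (m : Fin r → ℕ) :
    FiniteDimensional ℂ (O ⧸ (Gbar r m).comap O.subtype) := by
  have hker : LinearMap.ker ((truncMap r m).comp O.subtype) = (Gbar r m).comap O.subtype := by
    rw [LinearMap.ker_comp, ker_truncMap]
  rw [← hker]
  haveI : FiniteDimensional ℂ ((i : Fin r) → Fin (m i) → ℂ) := by infer_instance
  haveI : FiniteDimensional ℂ (LinearMap.range ((truncMap r m).comp O.subtype)) :=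
    FiniteDimensional.finiteDimensional_submodule _
  exact LinearEquiv.finiteDimensional
    (LinearMap.quotKerEquivRange ((truncMap r m).comp O.subtype)).symm

lemma finrank_quot_lt {K M : Type*} [Field K] [AddCommGroup M] [Module K M]
    (A B : Submodule K M) (hAB : A ≤ B) [FiniteDimensional K (M ⧸ A)]
    (x : M) (hxB : x ∈ B) (hxA : x ∉ A) :
    Module.finrank K (M ⧸ B) < Module.finrank K (M ⧸ A) := by
  have h1 : Module.finrank K ((M ⧸ A) ⧸ B.map A.mkQ) + Module.finrank K (B.map A.mkQ)
      = Module.finrank K (M ⧸ A) := Submodule.finrank_quotient_add_finrank _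
  have h2 : Module.finrank K ((M ⧸ A) ⧸ B.map A.mkQ) = Module.finrank K (M ⧸ B) :=
    (Submodule.quotientQuotientEquivQuotient A B hAB).finrank_eq
  have h3 : 0 < Module.finrank K (B.map A.mkQ) := by
    rw [Module.finrank_pos_iff_exists_ne_zero]
    refine ⟨⟨A.mkQ x, Submodule.mem_map_of_mem hxB⟩, ?_⟩
    simp only [ne_eq, Submodule.mk_eq_zero, Submodule.mkQ_apply,
      Submodule.Quotient.mk_eq_zero]
    exact hxA
  omega

lemma gbar_antitone (r : ℕ) {m m' : Fin r → ℕ} (h : m ≤ m') : Gbar r m' ≤ Gbar r m := by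
  intro f hf i
  exact le_trans (by exact_mod_cast h i) (hf i)

/-- Generic linear combination: if for each index there is an element of `Ffil`
with nonzero coefficient there, then there is a single element with all
coefficients nonzero on a given finite set. -/
lemma generic_combination (r : ℕ) (O : Submodule ℂ (Fin r → PowerSeries ℂ)) (ℓ : Fin r → ℕ)
    (f : Fin r → (Fin r → PowerSeries ℂ)) (hfF : ∀ i, f i ∈ Ffil r O ℓ)
    (hfc : ∀ i, PowerSeries.coeff (R := ℂ) (ℓ i) (f i i) ≠ 0) (S : Finset (Fin r)) :
    ∃ g ∈ Ffil r O ℓ, ∀ i ∈ S, PowerSeries.coeff (R := ℂ) (ℓ i) (g i) ≠ 0 := by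
  classical
  induction S using Finset.induction_on with
  | empty => exact ⟨0, Submodule.zero_mem _, by simp⟩
  | @insert k S hk ih =>
    obtain ⟨g, hgF, hgc⟩ := ih
    set T : Finset ℂ := (insert k S).image
      (fun i => -(PowerSeries.coeff (R := ℂ) (ℓ i) (g i)) / (PowerSeries.coeff (R := ℂ) (ℓ i) (f k i)))
    obtain ⟨c, hc⟩ := Infinite.exists_notMem_finset T
    refine ⟨g + c • f k, Submodule.add_mem _ hgF (Submodule.smul_mem _ _ (hfF k)), ?_⟩
    intro i hi
    have hcoeff : PowerSeries.coeff (R := ℂ) (ℓ i) ((g + c • f k) i)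
        = PowerSeries.coeff (R := ℂ) (ℓ i) (g i) + c * PowerSeries.coeff (R := ℂ) (ℓ i) (f k i) := by
      simp
    rw [hcoeff]
    by_cases hfi : PowerSeries.coeff (R := ℂ) (ℓ i) (f k i) = 0
    · rw [hfi, mul_zero, add_zero]
      rcases Finset.mem_insert.1 hi with rfl | hiS
      · exact absurd hfi (hfc i)
      · exact hgc i hiS
    · intro h0
      apply hc
      refine Finset.mem_image.2 ⟨i, hi, ?_⟩
      field_simp
      linear_combination -h0

/-- `ℓ` belongs to the semigroup of values of `O` (i.e. some `f ∈ O` has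
`ord_i f = ℓ_i` for every `i`) if and only if `h(ℓ+E_i) > h(ℓ)` for every index `i`. -/
theorem statement10 (r : ℕ) (hr : 1 ≤ r) (O : Submodule ℂ (Fin r → PowerSeries ℂ))
    (ℓ : Fin r → ℕ) :
    (∃ f ∈ O, ∀ i : Fin r, (f i).order = (ℓ i : ℕ∞)) ↔
      ∀ i : Fin r, hfun r O ℓ < hfun r O (ℓ + eN i) := by
  classical
  constructor
  · intro ⟨f, hfO, hford⟩ i
    unfold hfun
    refine finrank_quot_lt _ _ ?_ ⟨f, hfO⟩ ?_ ?_
    · exact Submodule.comap_mono (gbar_antitone r (fun j => Nat.le_add_right _ _))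
    · intro j
      rw [Submodule.coe_subtype, hford j]
    · intro hmem
      have := hmem i
      rw [Submodule.coe_subtype] at this
      have h1 : (((ℓ + eN i) i : ℕ) : ℕ∞) ≤ ((ℓ i : ℕ) : ℕ∞) := by
        rw [← hford i]; exact this
      have h2 : (ℓ + eN i) i ≤ ℓ i := Nat.cast_le.mp h1
      simp [eN, Pi.add_apply] at h2
  · intro hlt
    -- for each i, find f_i ∈ Ffil with nonzero coefficient at ℓ i in component i
    have key : ∀ i : Fin r, ∃ f ∈ Ffil r O ℓ, PowerSeries.coeff (R := ℂ) (ℓ i) (f i) ≠ 0 := by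
      intro i
      by_contra hcon
      push_neg at hcon
      have heq : (Gbar r (ℓ + eN i)).comap O.subtype = (Gbar r ℓ).comap O.subtype := by
        refine le_antisymm
          (Submodule.comap_mono (gbar_antitone r (fun j => Nat.le_add_right _ _))) ?_
        intro x hx
        simp only [Submodule.mem_comap, Submodule.coe_subtype] at hx ⊢
        have hxF : (x : Fin r → PowerSeries ℂ) ∈ Ffil r O ℓ := ⟨x.2, hx⟩
        have hc0 := hcon _ hxF
        intro j
        by_cases hji : j = i
        · subst hji
          have : ((ℓ j + 1 : ℕ) : ℕ∞) ≤ ((x : Fin r → PowerSeries ℂ) j).order := by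
            refine PowerSeries.nat_le_order _ _ ?_
            intro k hkl
            rcases Nat.lt_succ_iff_lt_or_eq.1 hkl with hkl | rfl
            · exact PowerSeries.coeff_of_lt_order _
                (lt_of_lt_of_le (by exact_mod_cast hkl) (hx j))
            · exact hc0
          simpa [eN, Pi.add_apply] using this
        · have := hx j
          simpa [eN, Pi.add_apply, hji] using this
      have := hlt i
      unfold hfun at this
      rw [heq] at this
      exact lt_irrefl _ this
    choose f hfF hfc using key
    obtain ⟨g, hgF, hgc⟩ := generic_combination r O ℓ f hfF hfc Finset.univ
    refine ⟨g, hgF.1, fun i => ?_⟩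
    refine le_antisymm (PowerSeries.order_le _ (hgc i (Finset.mem_univ i))) (hgF.2 i)
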